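/- There is an absolute constant C > 0 such that for every set A of positive integers and every nonidentity γ ∈ Γ_A with Frobenius norm ‖γ‖ ≥ C, the following holds: for all unit vectors v₊, v₋ ∈ ℝ² satisfying γ·v₊ = λ₊(γ)·v₊ and γ·v₋ = λ₋(γ)·v₋, one has |⟨v₊, v₋^⊥⟩| ≥ 1/2, where for v = (x,y) we set v^⊥ = (−y,x) and ⟨·,·⟩ is the standard inner product on ℝ². -/

import Mathlib

/-- The generator matrix `[[0,1],[1,a]]`. -/
def cfGen (a : ℕ) : Matrix (Fin 2) (Fin 2) ℤ := !![0, 1; 1, (a : ℤ)]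

/-- The determinant-one semigroup `Γ_A`: all nonempty finite products of the
generators `[[0,1],[1,a]]·[[0,1],[1,a']]` with `a, a' ∈ A`. -/
def GammaSemigroup (A : Set ℕ) : Set (Matrix (Fin 2) (Fin 2) ℤ) :=
  { M | ∃ l : List (ℕ × ℕ), l ≠ [] ∧ (∀ p ∈ l, p.1 ∈ A ∧ p.2 ∈ A) ∧
      M = (l.map (fun p => cfGen p.1 * cfGen p.2)).prod }

/-- The expanding eigenvalue `λ₊(γ) = (tr γ + √((tr γ)² − 4))/2` of a
determinant-one matrix with trace `> 2`. -/
noncomputable def lamPlus (γ : Matrix (Fin 2) (Fin 2) ℤ) : ℝ :=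
  (((γ 0 0 + γ 1 1 : ℤ) : ℝ) + Real.sqrt (((γ 0 0 + γ 1 1 : ℤ) : ℝ) ^ 2 - 4)) / 2

/-- The contracting eigenvalue `λ₋(γ) = (tr γ − √((tr γ)² − 4))/2`. -/
noncomputable def lamMinus (γ : Matrix (Fin 2) (Fin 2) ℤ) : ℝ :=
  (((γ 0 0 + γ 1 1 : ℤ) : ℝ) - Real.sqrt (((γ 0 0 + γ 1 1 : ℤ) : ℝ) ^ 2 - 4)) / 2

/-- Structural invariant of matrices in `Γ_A`. -/
def GoodM (M : Matrix (Fin 2) (Fin 2) ℤ) : Prop :=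
  1 ≤ M 0 0 ∧ M 0 0 ≤ M 0 1 ∧ M 0 1 ≤ M 1 1 ∧ M 0 0 ≤ M 1 0 ∧ M 1 0 ≤ M 1 1 ∧
  M 0 1 + M 0 0 ≤ M 1 0 + M 1 1 ∧ M 1 0 + M 0 0 ≤ M 0 1 + M 1 1 ∧
  M 0 0 * M 1 1 - M 0 1 * M 1 0 = 1

lemma goodM_gen {a a' : ℕ} (ha : 0 < a) (ha' : 0 < a') : GoodM (cfGen a * cfGen a') := by
  have e00 : (cfGen a * cfGen a') 0 0 = 1 := by
    simp [cfGen, Matrix.mul_apply, Fin.sum_univ_two]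
  have e01 : (cfGen a * cfGen a') 0 1 = (a' : ℤ) := by
    simp [cfGen, Matrix.mul_apply, Fin.sum_univ_two]
  have e10 : (cfGen a * cfGen a') 1 0 = (a : ℤ) := by
    simp [cfGen, Matrix.mul_apply, Fin.sum_univ_two]
  have e11 : (cfGen a * cfGen a') 1 1 = 1 + (a : ℤ) * (a' : ℤ) := by
    simp [cfGen, Matrix.mul_apply, Fin.sum_univ_two]
  have haz : (1 : ℤ) ≤ (a : ℤ) := by exact_mod_cast ha
  have haz' : (1 : ℤ) ≤ (a' : ℤ) := by exact_mod_cast ha'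
  refine ⟨?_, ?_, ?_, ?_, ?_, ?_, ?_, ?_⟩ <;>
    simp only [e00, e01, e10, e11] <;>
    nlinarith [mul_le_mul haz haz' (by linarith) (by linarith : (0:ℤ) ≤ (a:ℤ))]

lemma goodM_mul {M N : Matrix (Fin 2) (Fin 2) ℤ} (hM : GoodM M) (hN : GoodM N) :
    GoodM (M * N) := by
  obtain ⟨a1, ab, bd, ac, cd, s1, s2, dM⟩ := hM
  obtain ⟨e1, ef, fh, eg, gh, t1, t2, dN⟩ := hN
  have e00 : (M * N) 0 0 = M 0 0 * N 0 0 + M 0 1 * N 1 0 := by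
    simp [Matrix.mul_apply, Fin.sum_univ_two]
  have e01 : (M * N) 0 1 = M 0 0 * N 0 1 + M 0 1 * N 1 1 := by
    simp [Matrix.mul_apply, Fin.sum_univ_two]
  have e10 : (M * N) 1 0 = M 1 0 * N 0 0 + M 1 1 * N 1 0 := by
    simp [Matrix.mul_apply, Fin.sum_univ_two]
  have e11 : (M * N) 1 1 = M 1 0 * N 0 1 + M 1 1 * N 1 1 := by
    simp [Matrix.mul_apply, Fin.sum_univ_two]
  refine ⟨?_, ?_, ?_, ?_, ?_, ?_, ?_, ?_⟩ <;> simp only [e00, e01, e10, e11]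
  · nlinarith
  · nlinarith
  · nlinarith
  · nlinarith
  · nlinarith
  · nlinarith
  · nlinarith
  · linear_combination (N 0 0 * N 1 1 - N 0 1 * N 1 0) * dM + dN

lemma goodM_prod : ∀ l : List (ℕ × ℕ), l ≠ [] → (∀ p ∈ l, 0 < p.1 ∧ 0 < p.2) →
    GoodM ((l.map (fun p => cfGen p.1 * cfGen p.2)).prod)
  | [], h, _ => absurd rfl h
  | [p], _, hm => by
      simp only [List.map_cons, List.map_nil, List.prod_cons, List.prod_nil, mul_one]
      exact goodM_gen (hm p (List.mem_singleton_self p)).1 (hm p (List.mem_singleton_self p)).2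
  | p :: q :: l, _, hm => by
      have h2 := goodM_prod (q :: l) (List.cons_ne_nil q l)
        (fun r hr => hm r (List.mem_cons_of_mem p hr))
      have hp1 := hm p List.mem_cons_self
      rw [List.map_cons, List.prod_cons]
      exact goodM_mul (goodM_gen hp1.1 hp1.2) h2

lemma goodM_of_mem {A : Set ℕ} (hA : ∀ a ∈ A, 0 < a) {γ : Matrix (Fin 2) (Fin 2) ℤ}
    (hγ : γ ∈ GammaSemigroup A) : GoodM γ := by
  obtain ⟨l, hne, hmem, rfl⟩ := hγ
  exact goodM_prod l hne (fun p hp => ⟨hA p.1 (hmem p hp).1, hA p.2 (hmem p hp).2⟩)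

lemma core (a b c d x y p q s : ℝ)
    (h1 : 1 ≤ a) (hab : a ≤ b) (hbd : b ≤ d) (hac : a ≤ c) (hcd : c ≤ d)
    (hdet : a*d - b*c = 1)
    (hs2 : s^2 = (a+d)^2 - 4)
    (hux : x^2 + p^2 = 1) (huy : y^2 + q^2 = 1)
    (heigp : 2*b*p = (d - a + s)*x) (heigm : 2*b*q = (d - a - s)*y) :
    1/2 ≤ |x * (-q) + p * y| := by
  have hb1 : (1:ℝ) ≤ b := le_trans h1 hab
  have hc1 : (1:ℝ) ≤ c := le_trans h1 hac
  have hbne : b ≠ 0 := ne_of_gt (by linarith)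
  set P : ℝ := 4*b^2 + (d-a+s)^2 with hP
  set Q : ℝ := 4*b^2 + (d-a-s)^2 with hQ
  set D : ℝ := p*y - x*q with hD
  clear_value P Q D
  have hs2' : s^2 = (d-a)^2 + 4*b*c := by linear_combination hs2 + 4*hdet
  have hxx : x^2 * P = 4*b^2 := by
    rw [hP]; linear_combination (4*b^2)*hux - (2*b*p + (d-a+s)*x)*heigp
  have hyy : y^2 * Q = 4*b^2 := by
    rw [hQ]; linear_combination (4*b^2)*huy - (2*b*q + (d-a-s)*y)*heigm
  have hbD : b * D = s*(x*y) := by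
    rw [hD]; linear_combination (y/2)*heigp - (x/2)*heigm
  have key : D^2*(P*Q) = 16*s^2*b^2 := by
    have h' : b^2 * (D^2*(P*Q)) = b^2 * (16*s^2*b^2) := by
      calc b^2*(D^2*(P*Q)) = (b*D)^2 * (P*Q) := by ring
        _ = (s*(x*y))^2 * (P*Q) := by rw [hbD]
        _ = s^2 * ((x^2*P) * (y^2*Q)) := by ring
        _ = s^2 * ((4*b^2)*(4*b^2)) := by rw [hxx, hyy]
        _ = b^2 * (16*s^2*b^2) := by ring
    exact mul_left_cancel₀ (pow_ne_zero 2 hbne) h'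
  have hPpos : 0 < P := by rw [hP]; nlinarith [sq_nonneg (d-a+s)]
  have hQpos : 0 < Q := by rw [hQ]; nlinarith [sq_nonneg (d-a-s)]
  have hbc : (b-c)^2 ≤ (d-a)^2 := sq_le_sq' (by linarith) (by linarith)
  have hbc0 : (0:ℝ) ≤ b*c := mul_nonneg (by linarith) (by linarith)
  have hkey2 : b^2 + c^2 ≤ (d-a)^2 + 6*(b*c) := by
    have hexp : b^2 + c^2 = (b-c)^2 + 2*(b*c) := by ring
    linarith
  have hid : 32*s^2*b^2 - P*Q = 16*b^2*((d-a)^2 + 6*(b*c) - b^2 - c^2) := by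
    rw [hP, hQ]; linear_combination (24*b^2+(d-a)^2-4*b*c-s^2) * hs2'
  have hineq : P*Q ≤ 32*s^2*b^2 := by
    have hE : 0 ≤ (d-a)^2 + 6*(b*c) - b^2 - c^2 := by linarith
    have h4 : 0 ≤ 16*b^2*((d-a)^2 + 6*(b*c) - b^2 - c^2) :=
      mul_nonneg (by positivity) hE
    linarith [hid]
  have h5 : (1:ℝ)*(P*Q) ≤ (2*D^2)*(P*Q) := by
    have h5' : (2*D^2)*(P*Q) = 32*s^2*b^2 := by linear_combination 2*key
    rw [one_mul, h5']; exact hineq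
  have h6 : (1:ℝ) ≤ 2*D^2 := le_of_mul_le_mul_right h5 (mul_pos hPpos hQpos)
  have hD2 : 1/4 ≤ D^2 := by linarith
  have hgoal : x * (-q) + p * y = D := by rw [hD]; ring
  rw [hgoal, ← Real.sqrt_sq_eq_abs]
  have h8 : (1/2:ℝ) = Real.sqrt (1/4) := by
    rw [show (1/4:ℝ) = (1/2)^2 by norm_num, Real.sqrt_sq (by norm_num)]
  rw [h8]
  exact Real.sqrt_le_sqrt hD2

theorem eigenvector_inner_product_large :
    ∃ C : ℝ, 0 < C ∧
      ∀ (A : Set ℕ), (∀ a ∈ A, 0 < a) →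
        ∀ γ ∈ GammaSemigroup A, γ ≠ 1 →
          C ≤ Real.sqrt ((γ 0 0 : ℝ) ^ 2 + (γ 0 1 : ℝ) ^ 2 + (γ 1 0 : ℝ) ^ 2 + (γ 1 1 : ℝ) ^ 2) →
          ∀ vp vm : Fin 2 → ℝ,
            vp 0 ^ 2 + vp 1 ^ 2 = 1 →
            vm 0 ^ 2 + vm 1 ^ 2 = 1 →
            (γ.map ((↑) : ℤ → ℝ)).mulVec vp = lamPlus γ • vp →
            (γ.map ((↑) : ℤ → ℝ)).mulVec vm = lamMinus γ • vm →
            1 / 2 ≤ |vp 0 * (-(vm 1)) + vp 1 * vm 0| := by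
  refine ⟨1, one_pos, ?_⟩
  intro A hA γ hγ _ _ vp vm hvp hvm hp hm
  obtain ⟨g1, gab, gbd, gac, gcd, -, -, gdet⟩ := goodM_of_mem hA hγ
  have hp0 := congrFun hp 0
  have hm0 := congrFun hm 0
  simp only [Matrix.mulVec, dotProduct, Fin.sum_univ_two, Matrix.map_apply,
    Pi.smul_apply, smul_eq_mul, lamPlus, lamMinus] at hp0 hm0
  have htr : ((γ 0 0 + γ 1 1 : ℤ) : ℝ) = ((γ 0 0 : ℤ) : ℝ) + ((γ 1 1 : ℤ) : ℝ) := by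
    push_cast; ring
  rw [htr] at hp0 hm0
  set s : ℝ := Real.sqrt ((((γ 0 0 : ℤ) : ℝ) + ((γ 1 1 : ℤ) : ℝ)) ^ 2 - 4) with hsdef
  have h1 : (1:ℝ) ≤ ((γ 0 0 : ℤ) : ℝ) := by exact_mod_cast g1
  have hab : ((γ 0 0 : ℤ) : ℝ) ≤ ((γ 0 1 : ℤ) : ℝ) := by exact_mod_cast gab
  have hbd : ((γ 0 1 : ℤ) : ℝ) ≤ ((γ 1 1 : ℤ) : ℝ) := by exact_mod_cast gbd
  have hac : ((γ 0 0 : ℤ) : ℝ) ≤ ((γ 1 0 : ℤ) : ℝ) := by exact_mod_cast gac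
  have hcd : ((γ 1 0 : ℤ) : ℝ) ≤ ((γ 1 1 : ℤ) : ℝ) := by exact_mod_cast gcd
  have hdet : ((γ 0 0 : ℤ) : ℝ) * ((γ 1 1 : ℤ) : ℝ) -
      ((γ 0 1 : ℤ) : ℝ) * ((γ 1 0 : ℤ) : ℝ) = 1 := by exact_mod_cast gdet
  have hbc1 : (1:ℝ) ≤ ((γ 0 1 : ℤ) : ℝ) * ((γ 1 0 : ℤ) : ℝ) := by
    nlinarith [le_trans h1 hab, le_trans h1 hac]
  have harg : (0:ℝ) ≤ (((γ 0 0 : ℤ) : ℝ) + ((γ 1 1 : ℤ) : ℝ)) ^ 2 - 4 := by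
    nlinarith [sq_nonneg (((γ 0 0 : ℤ) : ℝ) - ((γ 1 1 : ℤ) : ℝ))]
  have hs2 : s ^ 2 = (((γ 0 0 : ℤ) : ℝ) + ((γ 1 1 : ℤ) : ℝ)) ^ 2 - 4 := by
    rw [hsdef]; exact Real.sq_sqrt harg
  have heigp : 2 * ((γ 0 1 : ℤ) : ℝ) * vp 1 =
      (((γ 1 1 : ℤ) : ℝ) - ((γ 0 0 : ℤ) : ℝ) + s) * vp 0 := by linear_combination 2 * hp0
  have heigm : 2 * ((γ 0 1 : ℤ) : ℝ) * vm 1 =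
      (((γ 1 1 : ℤ) : ℝ) - ((γ 0 0 : ℤ) : ℝ) - s) * vm 0 := by linear_combination 2 * hm0
  exact core _ _ _ _ (vp 0) (vm 0) (vp 1) (vm 1) s h1 hab hbd hac hcd hdet hs2 hvp hvm
    heigp heigm
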